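/- arXiv:1102.2670 — 3 statements merged into one kernel-verified Lean document; each statement's English description precedes it below -/
import Mathlib

section
/- For every t ≥ 1, Σ_{k=1}^t min( ‖m_{k-1}‖²_{V̄_{k-1}^{-1}}, 1 ) ≤ 2 ( log det(V̄_t) − log det(V) ) ≤ 2 ( d log( (trace(V) + t L²)/d ) − log det(V) ). -/
open Matrix

private lemma sum_Icc_shift {M : Type*} [AddCommMonoid M] (f : ℕ → M) (t : ℕ) :
    ∑ k ∈ Finset.Icc 1 t, f (k - 1) = ∑ i ∈ Finset.range t, f i := by
  induction t with
  | zero => simp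
  | succ n ih =>
      rw [Finset.sum_Icc_succ_top (Nat.le_add_left 1 n), ih, Finset.sum_range_succ]
      simp

private lemma min_le_two_log {x : ℝ} (hx : 0 ≤ x) : min x 1 ≤ 2 * Real.log (1 + x) := by
  rcases le_total x 1 with h | h
  · rw [min_eq_left h]
    have hx2 : Real.exp (x / 2) ≤ 1 + x := by
      have h3 : 1 - x / 2 ≤ Real.exp (-(x / 2)) := by
        have := Real.add_one_le_exp (-(x / 2)); linarith
      have h4 : (0:ℝ) < 1 - x / 2 := by linarith
      have h5 : Real.exp (x / 2) * (1 - x / 2) ≤ 1 := by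
        calc Real.exp (x / 2) * (1 - x / 2)
            ≤ Real.exp (x / 2) * Real.exp (-(x / 2)) :=
              mul_le_mul_of_nonneg_left h3 (Real.exp_pos _).le
          _ = 1 := by rw [← Real.exp_add]; simp
      nlinarith [Real.exp_pos (x / 2)]
    have := (Real.le_log_iff_exp_le (by linarith : (0:ℝ) < 1 + x)).mpr hx2
    linarith
  · rw [min_eq_right h]
    have h2 : Real.log 2 ≤ Real.log (1 + x) := Real.log_le_log (by norm_num) (by linarith)
    have := Real.log_two_gt_d9
    linarith

/-- `∑_{k=1}^t min(‖m_{k-1}‖²_{V̄_{k-1}⁻¹}, 1) ≤ 2(log det(V̄_t) - log det(V))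
      ≤ 2(d log((trace V + t L²)/d) - log det V)`. -/
theorem stmt6 {d : ℕ} (V : Matrix (Fin d) (Fin d) ℝ) (hV : V.PosDef)
    (m : ℕ → Fin d → ℝ) (L : ℝ) (hmL : ∀ k, Real.sqrt (m k ⬝ᵥ m k) ≤ L)
    (t : ℕ) (ht : 1 ≤ t) :
    (∑ k ∈ Finset.Icc 1 t,
        min (m (k - 1) ⬝ᵥ
          ((V + ∑ j ∈ Finset.Icc 1 (k - 1), vecMulVec (m (j - 1)) (m (j - 1)))⁻¹ *ᵥ
            m (k - 1))) 1)
      ≤ 2 * (Real.log (V + ∑ k ∈ Finset.Icc 1 t,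
              vecMulVec (m (k - 1)) (m (k - 1))).det - Real.log V.det) ∧
    2 * (Real.log (V + ∑ k ∈ Finset.Icc 1 t,
            vecMulVec (m (k - 1)) (m (k - 1))).det - Real.log V.det)
      ≤ 2 * ((d : ℝ) * Real.log ((V.trace + t * L ^ 2) / d) - Real.log V.det) := by
  set B : ℕ → Matrix (Fin d) (Fin d) ℝ :=
    fun n => V + ∑ j ∈ Finset.range n, vecMulVec (m j) (m j) with hBdef
  -- basic facts
  have hvv : ∀ x : Fin d → ℝ, (vecMulVec x x).PosSemidef := fun x => by
    have hxx : vecMulVec x x = replicateCol Unit x * (replicateCol Unit x)ᴴ := by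
      rw [vecMulVec_eq Unit, conjTranspose_replicateCol, star_trivial]
    rw [hxx]
    exact posSemidef_self_mul_conjTranspose _
  have hB : ∀ n, (B n).PosDef := fun n => by
    refine hV.add_posSemidef ?_
    refine Finset.sum_induction _ _ (fun a b ha hb => ha.add hb) Matrix.PosSemidef.zero ?_
    exact fun i _ => hvv (m i)
  have hq : ∀ n, 0 ≤ m n ⬝ᵥ (B n)⁻¹ *ᵥ m n := fun n => by
    have := ((hB n).inv).posSemidef.dotProduct_mulVec_nonneg (m n)
    simpa using this
  -- determinant recursion
  have hdet : ∀ n, (B (n + 1)).det = (B n).det * (1 + m n ⬝ᵥ (B n)⁻¹ *ᵥ m n) := fun n => by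
    have hrec : B (n + 1) = B n + vecMulVec (m n) (m n) := by
      simp [hBdef, Finset.sum_range_succ, add_assoc]
    rw [hrec, vecMulVec_eq Unit,
      det_add_replicateCol_mul_replicateRow (isUnit_iff_ne_zero.mpr (ne_of_gt (hB n).det_pos)) _ _]
    congr 1
    rw [det_unique, Matrix.add_apply, Matrix.one_apply_eq, Matrix.mul_assoc,
      ← Matrix.replicateCol_mulVec, Matrix.replicateRow_mul_replicateCol_apply]
  have hlog : ∀ n, Real.log (B (n + 1)).det - Real.log (B n).det
      = Real.log (1 + m n ⬝ᵥ (B n)⁻¹ *ᵥ m n) := fun n => by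
    rw [hdet n, Real.log_mul (ne_of_gt (hB n).det_pos)
      (by have := hq n; positivity)]
    ring
  -- rewrite statement sums in terms of B
  have hBeq : ∀ i, V + ∑ j ∈ Finset.Icc 1 i, vecMulVec (m (j - 1)) (m (j - 1)) = B i := fun i => by
    rw [hBdef]
    congr 1
    exact sum_Icc_shift (fun j => vecMulVec (m j) (m j)) i
  have hB0 : B 0 = V := by simp [hBdef]
  have key1 : (∑ k ∈ Finset.Icc 1 t,
        min (m (k - 1) ⬝ᵥ
          ((V + ∑ j ∈ Finset.Icc 1 (k - 1), vecMulVec (m (j - 1)) (m (j - 1)))⁻¹ *ᵥ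
            m (k - 1))) 1)
      ≤ 2 * (Real.log (B t).det - Real.log V.det) := by
    have hsum : (∑ k ∈ Finset.Icc 1 t,
        min (m (k - 1) ⬝ᵥ
          ((V + ∑ j ∈ Finset.Icc 1 (k - 1), vecMulVec (m (j - 1)) (m (j - 1)))⁻¹ *ᵥ
            m (k - 1))) 1)
        = ∑ i ∈ Finset.range t, min (m i ⬝ᵥ (B i)⁻¹ *ᵥ m i) 1 := by
      rw [← sum_Icc_shift (fun i => min (m i ⬝ᵥ (B i)⁻¹ *ᵥ m i) 1) t]
      exact Finset.sum_congr rfl fun k _ => by rw [hBeq (k - 1)]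
    rw [hsum, ← hB0]
    have htel : Real.log (B t).det - Real.log (B 0).det
        = ∑ i ∈ Finset.range t, (Real.log (B (i + 1)).det - Real.log (B i).det) :=
      (Finset.sum_range_sub (fun n => Real.log (B n).det) t).symm
    rw [htel, Finset.mul_sum]
    refine Finset.sum_le_sum fun i _ => ?_
    rw [hlog i]
    exact min_le_two_log (hq i)
  -- trace bound
  have hdot_nonneg : ∀ k, (0:ℝ) ≤ m k ⬝ᵥ m k := fun k =>
    Finset.sum_nonneg fun i _ => mul_self_nonneg _
  have hmm : ∀ k, m k ⬝ᵥ m k ≤ L ^ 2 := fun k => by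
    have h1 := hdot_nonneg k
    calc m k ⬝ᵥ m k = Real.sqrt (m k ⬝ᵥ m k) ^ 2 := (Real.sq_sqrt h1).symm
      _ ≤ L ^ 2 := pow_le_pow_left₀ (Real.sqrt_nonneg _) (hmL k) 2
  have htr : (B t).trace ≤ V.trace + t * L ^ 2 := by
    rw [hBdef]
    simp only [Matrix.trace_add, Matrix.trace_sum]
    have h2 : ∀ j ∈ Finset.range t, (vecMulVec (m j) (m j)).trace ≤ L ^ 2 := fun j _ => by
      have h3 : (vecMulVec (m j) (m j)).trace = m j ⬝ᵥ m j := by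
        simp [Matrix.trace, Matrix.diag, vecMulVec_apply, dotProduct]
      rw [h3]; exact hmm j
    have h4 : ∑ j ∈ Finset.range t, (vecMulVec (m j) (m j)).trace
        ≤ ∑ _j ∈ Finset.range t, L ^ 2 := Finset.sum_le_sum h2
    simp only [Finset.sum_const, Finset.card_range, nsmul_eq_mul] at h4
    linarith
  -- second inequality
  have key2 : Real.log (B t).det ≤ (d : ℝ) * Real.log ((V.trace + t * L ^ 2) / d) := by
    rcases Nat.eq_zero_or_pos d with hd0 | hd
    · subst hd0
      simp [Matrix.det_fin_zero]
    have hdR : (0:ℝ) < d := Nat.cast_pos.mpr hd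
    have hH := (hB t).isHermitian
    set lam := hH.eigenvalues with hlam
    have hpos : ∀ i, 0 < lam i := (hB t).eigenvalues_pos
    have hdet_eig : (B t).det = ∏ i, lam i := by
      have := hH.det_eq_prod_eigenvalues
      simpa using this
    have htr_eig : (B t).trace = ∑ i, lam i := by
      nth_rewrite 1 [hH.spectral_theorem]
      have h1 : (star (hH.eigenvectorUnitary : Matrix (Fin d) (Fin d) ℝ))
          * (hH.eigenvectorUnitary : Matrix (Fin d) (Fin d) ℝ) = 1 :=
        Matrix.mem_unitaryGroup_iff'.mp hH.eigenvectorUnitary.2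
      rw [Unitary.conjStarAlgAut_apply]
      rw [Matrix.trace_mul_comm, ← Matrix.mul_assoc, h1, Matrix.one_mul, Matrix.trace_diagonal]
      simp [hlam]
    have htrpos : 0 < (B t).trace := by
      rw [htr_eig]
      have : Nonempty (Fin d) := Fin.pos_iff_nonempty.mp hd
      exact Finset.sum_pos (fun i _ => hpos i) Finset.univ_nonempty
    have hgm : ∏ i, (lam i) ^ ((d:ℝ)⁻¹) ≤ ∑ i, (d:ℝ)⁻¹ * lam i :=
      Real.geom_mean_le_arith_mean_weighted Finset.univ (fun _ => (d:ℝ)⁻¹) lam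
        (fun i _ => by positivity)
        (by simp [Finset.sum_const, Finset.card_univ]; field_simp)
        (fun i _ => (hpos i).le)
    have h3 : ∑ i, (d:ℝ)⁻¹ * Real.log (lam i) ≤ Real.log ((B t).trace / d) := by
      calc ∑ i, (d:ℝ)⁻¹ * Real.log (lam i)
          = Real.log (∏ i, (lam i) ^ ((d:ℝ)⁻¹)) := by
            rw [Real.log_prod (fun i _ => (Real.rpow_pos_of_pos (hpos i) _).ne')]
            exact (Finset.sum_congr rfl fun i _ => by rw [Real.log_rpow (hpos i)]).symm
        _ ≤ Real.log (∑ i, (d:ℝ)⁻¹ * lam i) :=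
            Real.log_le_log (Finset.prod_pos fun i _ => Real.rpow_pos_of_pos (hpos i) _) hgm
        _ = Real.log ((B t).trace / d) := by
            rw [← Finset.mul_sum, ← htr_eig, div_eq_inv_mul]
    have h5 : Real.log ((B t).trace / d) ≤ Real.log ((V.trace + t * L ^ 2) / d) :=
      Real.log_le_log (by positivity) (by gcongr)
    calc Real.log (B t).det = ∑ i, Real.log (lam i) := by
          rw [hdet_eig, Real.log_prod (fun i _ => (hpos i).ne')]
      _ = (d:ℝ) * ∑ i, (d:ℝ)⁻¹ * Real.log (lam i) := by
          rw [Finset.mul_sum]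
          exact Finset.sum_congr rfl fun i _ => by field_simp
      _ ≤ (d:ℝ) * Real.log ((B t).trace / d) := by
          exact mul_le_mul_of_nonneg_left h3 hdR.le
      _ ≤ (d:ℝ) * Real.log ((V.trace + t * L ^ 2) / d) :=
          mul_le_mul_of_nonneg_left h5 hdR.le
  constructor
  · rw [hBeq t]; exact key1
  · rw [hBeq t]; linarith [key2]
end

section
/- If every eigenvalue of V is at least λ₀ and λ₀ ≥ max(1, L²), then for every t ≥ 1, Σ_{k=1}^t ‖m_{k-1}‖²_{V̄_{k-1}^{-1}} ≤ 2 log( det(V̄_t) / det(V) ). -/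
open Matrix

namespace Stmt7Aux

variable {d : ℕ}

lemma vecMulVec_mulVec' (v x : Fin d → ℝ) : vecMulVec v v *ᵥ x = (v ⬝ᵥ x) • v := by
  funext i
  simp [vecMulVec_apply, mulVec, dotProduct, Finset.sum_mul, Finset.mul_sum, mul_comm, mul_assoc,
    mul_left_comm]

lemma posSemidef_vecMulVec (v : Fin d → ℝ) : (vecMulVec v v).PosSemidef := by
  refine Matrix.PosSemidef.of_dotProduct_mulVec_nonneg ?_ ?_
  · ext i j
    simp [vecMulVec_apply, conjTranspose_apply, mul_comm]
  · intro x
    rw [vecMulVec_mulVec']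
    simp only [star_trivial, dotProduct_smul, smul_eq_mul]
    rw [dotProduct_comm]
    exact mul_self_nonneg _

/-- `x ≤ 2 log (1 + x)` for `0 ≤ x ≤ 1`. -/
lemma le_two_log (x : ℝ) (hx0 : 0 ≤ x) (hx1 : x ≤ 1) : x ≤ 2 * Real.log (1 + x) := by
  have h1 : (0:ℝ) < 1 + x := by linarith
  have h2 : (0:ℝ) < (1 + x)⁻¹ := by positivity
  have h3 := Real.log_le_sub_one_of_pos h2
  rw [Real.log_inv] at h3
  have h4 : (1 + x)⁻¹ * (1 + x) = 1 := inv_mul_cancel₀ (ne_of_gt h1)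
  nlinarith [h3, h4]

/-- Matrix determinant lemma, specialized to a symmetric rank-one update. -/
lemma det_add_vecMulVec {A : Matrix (Fin d) (Fin d) ℝ} (hA : IsUnit A.det) (v : Fin d → ℝ) :
    (A + vecMulVec v v).det = A.det * (1 + v ⬝ᵥ (A⁻¹ *ᵥ v)) := by
  rw [vecMulVec_eq (Fin 1), det_add_replicateCol_mul_replicateRow (ι := Fin 1) hA]
  congr 1
  rw [dotProduct_mulVec]
  simp [det_unique, mul_apply, replicateRow_apply, replicateCol_apply, vecMul, dotProduct, Finset.sum_mul, mul_comm]

lemma inv_quad_bounds {A : Matrix (Fin d) (Fin d) ℝ} (hA : A.PosDef)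
    {lam0 L : ℝ} (hq : ∀ x : Fin d → ℝ, lam0 * (x ⬝ᵥ x) ≤ x ⬝ᵥ (A *ᵥ x))
    (h1 : 1 ≤ lam0) (hL : L ^ 2 ≤ lam0) {v : Fin d → ℝ} (hv : v ⬝ᵥ v ≤ L ^ 2) :
    0 ≤ v ⬝ᵥ (A⁻¹ *ᵥ v) ∧ v ⬝ᵥ (A⁻¹ *ᵥ v) ≤ 1 := by
  set y : Fin d → ℝ := A⁻¹ *ᵥ v with hy
  have hAy : A *ᵥ y = v := by
    rw [hy, mulVec_mulVec, Matrix.mul_nonsing_inv A (IsUnit.mk0 _ (ne_of_gt hA.det_pos)),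
      one_mulVec]
  have hxA : v ⬝ᵥ y = y ⬝ᵥ (A *ᵥ y) := by rw [hAy]; exact dotProduct_comm _ _
  have hyy : 0 ≤ y ⬝ᵥ y := by
    unfold dotProduct
    exact Finset.sum_nonneg fun i _ => mul_self_nonneg _
  have hlow : lam0 * (y ⬝ᵥ y) ≤ v ⬝ᵥ y := by rw [hxA]; exact hq y
  have hx0 : 0 ≤ v ⬝ᵥ y := le_trans (by positivity) hlow
  have hcs : (v ⬝ᵥ y) ^ 2 ≤ (v ⬝ᵥ v) * (y ⬝ᵥ y) := by
    have := Finset.sum_mul_sq_le_sq_mul_sq Finset.univ v y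
    simpa [dotProduct, sq, Finset.mul_sum, mul_pow] using this
  refine ⟨hx0, ?_⟩
  nlinarith [hlow, hcs, hyy, hx0, hv, hL, h1, sq_nonneg L,
    mul_nonneg hyy (sq_nonneg L)]

lemma key (V : Matrix (Fin d) (Fin d) ℝ) (hV : V.PosDef)
    (m : ℕ → Fin d → ℝ) (L lam0 : ℝ) (hmL : ∀ k, Real.sqrt (m k ⬝ᵥ m k) ≤ L)
    (hlam0 : ∀ x : Fin d → ℝ, lam0 * (x ⬝ᵥ x) ≤ x ⬝ᵥ (V *ᵥ x))
    (hlam0' : max 1 (L ^ 2) ≤ lam0) (t : ℕ) :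
    (∑ k ∈ Finset.Icc 1 t,
        m (k - 1) ⬝ᵥ
          ((V + ∑ j ∈ Finset.Icc 1 (k - 1), vecMulVec (m (j - 1)) (m (j - 1)))⁻¹ *ᵥ
            m (k - 1)))
      ≤ 2 * Real.log ((V + ∑ k ∈ Finset.Icc 1 t,
          vecMulVec (m (k - 1)) (m (k - 1))).det / V.det) := by
  have h1 : (1:ℝ) ≤ lam0 := le_trans (le_max_left _ _) hlam0'
  have hL : L ^ 2 ≤ lam0 := le_trans (le_max_right _ _) hlam0'
  have hmm : ∀ k, m k ⬝ᵥ m k ≤ L ^ 2 := by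
    intro k
    have h0 : 0 ≤ m k ⬝ᵥ m k := Finset.sum_nonneg fun i _ => mul_self_nonneg _
    calc m k ⬝ᵥ m k = Real.sqrt (m k ⬝ᵥ m k) ^ 2 := (Real.sq_sqrt h0).symm
      _ ≤ L ^ 2 := by
        have := hmL k
        have hs : 0 ≤ Real.sqrt (m k ⬝ᵥ m k) := Real.sqrt_nonneg _
        nlinarith
  have hS : ∀ s : Finset ℕ, (∑ j ∈ s, vecMulVec (m (j - 1)) (m (j - 1))).PosSemidef := by
    intro s
    induction s using Finset.cons_induction with
    | empty => simpa using Matrix.PosSemidef.zero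
    | cons a s ha ih =>
      rw [Finset.sum_cons]
      exact (posSemidef_vecMulVec _).add ih
  have hWpd : ∀ k, (V + ∑ j ∈ Finset.Icc 1 k,
      vecMulVec (m (j - 1)) (m (j - 1))).PosDef := fun k => hV.add_posSemidef (hS _)
  have hWq : ∀ k (x : Fin d → ℝ), lam0 * (x ⬝ᵥ x) ≤
      x ⬝ᵥ ((V + ∑ j ∈ Finset.Icc 1 k, vecMulVec (m (j - 1)) (m (j - 1))) *ᵥ x) := by
    intro k x
    have hpsd := (hS (Finset.Icc 1 k)).dotProduct_mulVec_nonneg x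
    rw [star_trivial] at hpsd
    simp only [add_mulVec, dotProduct_add]
    linarith [hlam0 x]
  induction t with
  | zero =>
    simp only [show Finset.Icc 1 0 = (∅ : Finset ℕ) from rfl, Finset.sum_empty, add_zero]
    rw [div_self (ne_of_gt hV.det_pos), Real.log_one]
    norm_num
  | succ t ih =>
    have hins : Finset.Icc 1 (t + 1) = insert (t + 1) (Finset.Icc 1 t) :=
      (Finset.insert_Icc_right_eq_Icc_add_one (by omega)).symm
    have hnotmem : t + 1 ∉ Finset.Icc 1 t := by simp
    have hxb := inv_quad_bounds (hWpd t) (hWq t) h1 hL (hmm t)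
    have hdet : (V + ∑ k ∈ Finset.Icc 1 (t + 1), vecMulVec (m (k - 1)) (m (k - 1))).det
        = (V + ∑ k ∈ Finset.Icc 1 t, vecMulVec (m (k - 1)) (m (k - 1))).det
          * (1 + m t ⬝ᵥ ((V + ∑ k ∈ Finset.Icc 1 t, vecMulVec (m (k - 1)) (m (k - 1)))⁻¹
              *ᵥ m t)) := by
      have heq : V + ∑ k ∈ Finset.Icc 1 (t + 1), vecMulVec (m (k - 1)) (m (k - 1))
          = (V + ∑ k ∈ Finset.Icc 1 t, vecMulVec (m (k - 1)) (m (k - 1)))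
            + vecMulVec (m t) (m t) := by
        rw [hins, Finset.sum_insert hnotmem]
        simp only [Nat.add_sub_cancel]
        abel
      rw [heq, det_add_vecMulVec (IsUnit.mk0 _ (ne_of_gt (hWpd t).det_pos)) (m t)]
    have hdWt : 0 < (V + ∑ k ∈ Finset.Icc 1 t,
        vecMulVec (m (k - 1)) (m (k - 1))).det := (hWpd t).det_pos
    have hdV : 0 < V.det := hV.det_pos
    have h1x : 0 < 1 + m t ⬝ᵥ ((V + ∑ k ∈ Finset.Icc 1 t,
        vecMulVec (m (k - 1)) (m (k - 1)))⁻¹ *ᵥ m t) := by linarith [hxb.1]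
    have hsum : (∑ k ∈ Finset.Icc 1 (t + 1),
        m (k - 1) ⬝ᵥ
          ((V + ∑ j ∈ Finset.Icc 1 (k - 1), vecMulVec (m (j - 1)) (m (j - 1)))⁻¹ *ᵥ
            m (k - 1)))
        = (∑ k ∈ Finset.Icc 1 t,
            m (k - 1) ⬝ᵥ
              ((V + ∑ j ∈ Finset.Icc 1 (k - 1), vecMulVec (m (j - 1)) (m (j - 1)))⁻¹ *ᵥ
                m (k - 1)))
          + m t ⬝ᵥ ((V + ∑ k ∈ Finset.Icc 1 t, vecMulVec (m (k - 1)) (m (k - 1)))⁻¹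
              *ᵥ m t) := by
      rw [hins, Finset.sum_insert hnotmem]
      simp only [Nat.add_sub_cancel]
      exact add_comm _ _
    rw [hsum, hdet]
    have hlog := le_two_log _ hxb.1 hxb.2
    rw [Real.log_div (mul_ne_zero (ne_of_gt hdWt) (ne_of_gt h1x)) (ne_of_gt hdV),
      Real.log_mul (ne_of_gt hdWt) (ne_of_gt h1x)]
    rw [Real.log_div (ne_of_gt hdWt) (ne_of_gt hdV)] at ih
    linarith [ih, hlog]

end Stmt7Aux

open Matrix

/-- If every eigenvalue of `V` is at least `λ₀` and `λ₀ ≥ max(1, L²)`, then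
`∑_{k=1}^t ‖m_{k-1}‖²_{V̄_{k-1}⁻¹} ≤ 2 log(det(V̄_t)/det(V))`. -/
theorem stmt7 {d : ℕ} (V : Matrix (Fin d) (Fin d) ℝ) (hV : V.PosDef)
    (m : ℕ → Fin d → ℝ) (L lam0 : ℝ) (hmL : ∀ k, Real.sqrt (m k ⬝ᵥ m k) ≤ L)
    (hlam0 : ∀ x : Fin d → ℝ, lam0 * (x ⬝ᵥ x) ≤ x ⬝ᵥ (V *ᵥ x))
    (hlam0' : max 1 (L ^ 2) ≤ lam0)
    (t : ℕ) (ht : 1 ≤ t) :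
    (∑ k ∈ Finset.Icc 1 t,
        m (k - 1) ⬝ᵥ
          ((V + ∑ j ∈ Finset.Icc 1 (k - 1), vecMulVec (m (j - 1)) (m (j - 1)))⁻¹ *ᵥ
            m (k - 1)))
      ≤ 2 * Real.log ((V + ∑ k ∈ Finset.Icc 1 t,
          vecMulVec (m (k - 1)) (m (k - 1))).det / V.det) := by
  exact Stmt7Aux.key V hV m L lam0 hmL hlam0 hlam0' t
end

section
/- Let B be a positive definite d×d matrix, C a positive semidefinite d×d matrix, and A = B + C. Then for every x ≠ 0, (xᵀ A x) / (xᵀ B x) ≤ det(A) / det(B). -/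
open Matrix
open scoped RealInnerProductSpace

private lemma key_lemma {d : ℕ} {N : Matrix (Fin d) (Fin d) ℝ} (hN : N.PosSemidef) (z : Fin d → ℝ) :
    z ⬝ᵥ ((1 + N) *ᵥ z) ≤ (1 + N).det * (z ⬝ᵥ z) := by
  have hMh : (1 + N).IsHermitian := Matrix.isHermitian_one.add hN.1
  set M := 1 + N with hMdef
  set U : Matrix (Fin d) (Fin d) ℝ := (hMh.eigenvectorUnitary : Matrix (Fin d) (Fin d) ℝ) with hU
  set μ := hMh.eigenvalues with hμ
  have hμ1 : ∀ i, 1 ≤ μ i := by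
    intro i
    have h1 := hMh.eigenvalues_eq i
    set v : Fin d → ℝ := ⇑(hMh.eigenvectorBasis i) with hv
    have hv1 : v ⬝ᵥ v = 1 := by
      have h2 := hMh.eigenvectorBasis.orthonormal.1 i
      have h3 : (inner ℝ (hMh.eigenvectorBasis i) (hMh.eigenvectorBasis i) : ℝ) = 1 := by
        rw [real_inner_self_eq_norm_mul_norm, h2, mul_one]
      rw [EuclideanSpace.inner_eq_star_dotProduct] at h3
      simpa using h3
    have hnn : 0 ≤ v ⬝ᵥ (N *ᵥ v) := by simpa using hN.re_dotProduct_nonneg v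
    have : μ i = v ⬝ᵥ (M *ᵥ v) := by simpa using h1
    rw [this, hMdef, add_mulVec, one_mulVec, dotProduct_add, hv1]
    linarith
  have hUU : U * star U = 1 := Matrix.mem_unitaryGroup_iff.mp hMh.eigenvectorUnitary.2
  have hsU : star U = Uᵀ := by
    ext i j; simp [Matrix.star_apply]
  have hUD : M = U * diagonal μ * Uᵀ := by
    have := hMh.spectral_theorem
    rw [Unitary.conjStarAlgAut_apply, ← hU, hsU] at this
    simpa [hU, hμ, Function.comp] using this
  set w := Uᵀ *ᵥ z with hw
  have hwv : w = vecMul z U := by rw [hw, Matrix.mulVec_transpose]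
  have hdet : M.det = ∏ i, μ i := by
    have := hMh.det_eq_prod_eigenvalues
    simpa using this
  have hzz : z ⬝ᵥ z = w ⬝ᵥ w := by
    calc z ⬝ᵥ z = z ⬝ᵥ ((U * star U) *ᵥ z) := by rw [hUU, Matrix.one_mulVec]
    _ = z ⬝ᵥ (U *ᵥ (star U *ᵥ z)) := by rw [Matrix.mulVec_mulVec]
    _ = vecMul z U ⬝ᵥ (star U *ᵥ z) := by rw [Matrix.dotProduct_mulVec]
    _ = w ⬝ᵥ w := by rw [hsU, ← hwv, ← hw]
  have hzM : z ⬝ᵥ (M *ᵥ z) = ∑ i, μ i * (w i)^2 := by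
    calc z ⬝ᵥ (M *ᵥ z) = z ⬝ᵥ (U *ᵥ (diagonal μ *ᵥ (Uᵀ *ᵥ z))) := by
          rw [hUD, Matrix.mulVec_mulVec, Matrix.mulVec_mulVec]
    _ = vecMul z U ⬝ᵥ (diagonal μ *ᵥ w) := by rw [Matrix.dotProduct_mulVec, hw]
    _ = ∑ i, μ i * (w i)^2 := by
          rw [← hwv]
          simp [dotProduct, Matrix.mulVec_diagonal]
          exact Finset.sum_congr rfl fun i _ => by ring
  have hwnn : ∀ i : Fin d, (0:ℝ) ≤ (w i)^2 := fun i => sq_nonneg _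
  have hstep : ∑ i, μ i * (w i)^2 ≤ (∏ i, μ i) * ∑ i, (w i)^2 := by
    rw [Finset.mul_sum]
    refine Finset.sum_le_sum fun i _ => ?_
    have hsplit := Finset.mul_prod_erase Finset.univ μ (Finset.mem_univ i)
    have h1 : (1:ℝ) ≤ ∏ j ∈ Finset.univ.erase i, μ j := by
      have := Finset.prod_le_prod (s := Finset.univ.erase i) (f := fun _ => (1:ℝ)) (g := μ)
        (fun j _ => zero_le_one) (fun j _ => hμ1 j)
      simpa using this
    have h : μ i ≤ ∏ j, μ j := by
      rw [← hsplit]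
      exact le_mul_of_one_le_right (le_trans zero_le_one (hμ1 i)) h1
    exact mul_le_mul_of_nonneg_right h (hwnn i)
  rw [hzM, hdet, hzz]
  have hww : w ⬝ᵥ w = ∑ i, (w i)^2 := by simp [dotProduct, sq]
  rw [hww]
  exact hstep

/-- If `B` is positive definite, `C` is positive semidefinite and `A = B + C`, then for
every `x ≠ 0`, `(xᵀ A x)/(xᵀ B x) ≤ det(A)/det(B)`. -/
theorem stmt17 {d : ℕ} (A B C : Matrix (Fin d) (Fin d) ℝ)
    (hB : B.PosDef) (hC : C.PosSemidef) (hA : A = B + C)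
    (x : Fin d → ℝ) (hx : x ≠ 0) :
    (x ⬝ᵥ (A *ᵥ x)) / (x ⬝ᵥ (B *ᵥ x)) ≤ A.det / B.det := by
  classical
  have hBsd := hB.posSemidef
  obtain ⟨S, hSS, hSh⟩ : ∃ S : Matrix (Fin d) (Fin d) ℝ, S * S = B ∧ S.IsHermitian := by
    open scoped MatrixOrder in
    exact ⟨CFC.sqrt B, CFC.sqrt_mul_sqrt_self B hBsd.nonneg, (CFC.sqrt_nonneg B).posSemidef.1⟩
  have hBdet : 0 < B.det := hB.det_pos
  have hdetSS : S.det * S.det = B.det := by rw [← Matrix.det_mul, hSS]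
  have hdetS : S.det ≠ 0 := by
    intro h
    rw [h, mul_zero] at hdetSS
    exact hBdet.ne' hdetSS.symm
  have hSu : IsUnit S.det := isUnit_iff_ne_zero.mpr hdetS
  have hSi : S⁻¹ * S = 1 := Matrix.nonsing_inv_mul S hSu
  have hiS : S * S⁻¹ = 1 := Matrix.mul_nonsing_inv S hSu
  have hSih : (S⁻¹).IsHermitian := hSh.inv
  have hSit : (S⁻¹)ᵀ = S⁻¹ := by
    ext i j
    have := congrFun (congrFun hSih i) j
    simpa [Matrix.conjTranspose_apply] using this
  set N := S⁻¹ * C * S⁻¹ with hNdef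
  have hNpsd : N.PosSemidef := by
    have h := hC.conjTranspose_mul_mul_same (B := S⁻¹)
    rwa [hSih.eq] at h
  set z := S *ᵥ x with hz
  have hM : 1 + N = S⁻¹ * A * S⁻¹ := by
    have hB1 : S⁻¹ * B * S⁻¹ = 1 := by
      rw [← hSS, ← Matrix.mul_assoc, Matrix.mul_assoc _ S S, ← Matrix.mul_assoc S⁻¹ S,
        hSi, Matrix.one_mul, hiS]
    rw [hA, Matrix.mul_add, Matrix.add_mul, hB1, hNdef]
  have hiz : S⁻¹ *ᵥ z = x := by
    rw [hz, Matrix.mulVec_mulVec, hSi, Matrix.one_mulVec]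
  have hvz : vecMul z S⁻¹ = x := by
    rw [← Matrix.mulVec_transpose, hSit, hiz]
  have hterm : z ⬝ᵥ ((1 + N) *ᵥ z) = x ⬝ᵥ (A *ᵥ x) := by
    rw [hM, ← Matrix.mulVec_mulVec, ← Matrix.mulVec_mulVec, hiz,
      Matrix.dotProduct_mulVec, hvz]
  have hdet2 : (1 + N).det = A.det / B.det := by
    rw [hM, Matrix.det_mul, Matrix.det_mul, Matrix.det_nonsing_inv, Ring.inverse_eq_inv', ← hdetSS]
    field_simp
  have hzz : z ⬝ᵥ z = x ⬝ᵥ (B *ᵥ x) := by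
    have hSt : Sᵀ = S := by
      ext i j
      have := congrFun (congrFun hSh i) j
      simpa [Matrix.conjTranspose_apply] using this
    have hvzS : vecMul z S = B *ᵥ x := by
      rw [← Matrix.mulVec_transpose, hSt, hz, Matrix.mulVec_mulVec, hSS]
    calc z ⬝ᵥ z = z ⬝ᵥ (S *ᵥ x) := by rw [← hz]
    _ = vecMul z S ⬝ᵥ x := by rw [Matrix.dotProduct_mulVec]
    _ = (B *ᵥ x) ⬝ᵥ x := by rw [hvzS]
    _ = x ⬝ᵥ (B *ᵥ x) := dotProduct_comm _ _
  have hxBx : 0 < x ⬝ᵥ (B *ᵥ x) := by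
    have := hB.re_dotProduct_pos hx
    simpa using this
  have hkey := key_lemma hNpsd z
  rw [hterm, hdet2, hzz] at hkey
  rw [div_le_div_iff₀ hxBx hBdet]
  rw [div_mul_eq_mul_div, le_div_iff₀ hBdet] at hkey
  linarith
end
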